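/- For every real δ with 0 < δ < 1 and every nonnegative integer m, there is a constant C > 0 such that for all ε ∈ (0, 1/2), ∫_0^∞ ε |log η|^m / ((1 + εη)(2 + η)^δ) dη ≤ C ε^δ |log ε|^m. -/

import Mathlib

open MeasureTheory Real Set

lemma intA {a : ℝ} (h1 : -1 < a) (h2 : a < 0) :
    IntegrableOn (fun t : ℝ => t ^ a / (1 + t)) (Ioi 0) := by
  have hmeas : Measurable fun t : ℝ => t ^ a / (1 + t) := by fun_prop
  rw [← Set.Ioc_union_Ioi_eq_Ioi (zero_le_one : (0:ℝ) ≤ 1)]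
  apply IntegrableOn.union
  · have hint : IntegrableOn (fun t : ℝ => t ^ a) (Ioc 0 1) := by
      have := (intervalIntegral.intervalIntegrable_rpow' (a := 0) (b := 1) h1)
      rwa [intervalIntegrable_iff_integrableOn_Ioc_of_le zero_le_one] at this
    apply hint.mono' hmeas.aestronglyMeasurable.restrict
    filter_upwards [ae_restrict_mem measurableSet_Ioc] with t ht
    have ht0 : 0 < t := ht.1
    rw [Real.norm_eq_abs, abs_of_nonneg (by positivity)]
    have h1t : (1:ℝ) ≤ 1 + t := by linarith
    calc t ^ a / (1 + t) ≤ t ^ a / 1 := by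
          apply div_le_div_of_nonneg_left (by positivity) one_pos h1t
      _ = t ^ a := div_one _
  · have hint : IntegrableOn (fun t : ℝ => t ^ (a - 1)) (Ioi 1) :=
      integrableOn_Ioi_rpow_of_lt (by linarith) one_pos
    apply hint.mono' hmeas.aestronglyMeasurable.restrict
    filter_upwards [ae_restrict_mem measurableSet_Ioi] with t ht
    have ht0 : (0:ℝ) < t := lt_trans one_pos ht
    rw [Real.norm_eq_abs, abs_of_nonneg (by positivity)]
    rw [Real.rpow_sub ht0, Real.rpow_one]
    apply div_le_div_of_nonneg_left (by positivity) ht0 (by linarith)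

lemma abs_log_pow_le (m : ℕ) {c t : ℝ} (hc : 0 < c) (ht : 0 < t) :
    |Real.log t| ^ m ≤ c⁻¹ ^ m * (t ^ (c * (m:ℝ)) + t ^ (-(c * (m:ℝ)))) := by
  have hpos1 : 0 < t ^ (c * (m:ℝ)) := Real.rpow_pos_of_pos ht _
  have hpos2 : 0 < t ^ (-(c * (m:ℝ))) := Real.rpow_pos_of_pos ht _
  rcases le_total 1 t with h | h
  · have h2 : |Real.log t| ≤ t ^ c / c := by
      rw [abs_of_nonneg (Real.log_nonneg h)]
      exact Real.log_le_rpow_div ht.le hc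
    calc |Real.log t| ^ m ≤ (t ^ c / c) ^ m := pow_le_pow_left₀ (abs_nonneg _) h2 m
      _ = c⁻¹ ^ m * t ^ (c * (m:ℝ)) := by
          rw [div_eq_mul_inv, mul_pow, mul_comm, Real.rpow_mul ht.le,
            Real.rpow_natCast]
      _ ≤ _ := by nlinarith [pow_nonneg (inv_nonneg.mpr hc.le) m]
  · have h2 : |Real.log t| ≤ t ^ (-c) / c := by
      rw [abs_of_nonpos (Real.log_nonpos ht.le h), ← Real.log_inv,
        Real.rpow_neg ht.le, ← Real.inv_rpow ht.le]
      exact Real.log_le_rpow_div (by positivity) hc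
    calc |Real.log t| ^ m ≤ (t ^ (-c) / c) ^ m := pow_le_pow_left₀ (abs_nonneg _) h2 m
      _ = c⁻¹ ^ m * t ^ (-(c * (m:ℝ))) := by
          rw [div_eq_mul_inv, mul_pow, mul_comm, ← Real.rpow_natCast (t ^ (-c)) m,
            ← Real.rpow_mul ht.le, neg_mul]
      _ ≤ _ := by nlinarith [pow_nonneg (inv_nonneg.mpr hc.le) m]

noncomputable def Mfun (δ : ℝ) (m : ℕ) (t : ℝ) : ℝ := |Real.log t| ^ m / ((1 + t) * t ^ δ)

noncomputable def Nfun (δ : ℝ) (t : ℝ) : ℝ := 1 / ((1 + t) * t ^ δ)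

set_option maxHeartbeats 1000000 in
theorem stmt_3 (δ : ℝ) (hδ0 : 0 < δ) (hδ1 : δ < 1) (m : ℕ) :
    ∃ C > 0, ∀ ε ∈ Ioo (0:ℝ) (1/2),
      ∫ η in Ioi (0:ℝ), ε * |Real.log η| ^ m / ((1 + ε * η) * (2 + η) ^ δ)
        ≤ C * ε ^ δ * |Real.log ε| ^ m := by
  have hmin : 0 < min δ (1 - δ) := lt_min hδ0 (by linarith)
  set c : ℝ := min δ (1 - δ) / (2 * (m + 1)) with hcdef
  have hc0 : 0 < c := by positivity
  have hcm : c * ((m : ℝ) + 1) = min δ (1 - δ) / 2 := by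
    rw [hcdef]; field_simp
  have hcm1 : c * (m : ℝ) < δ := by
    nlinarith [min_le_left δ (1 - δ), hc0]
  have hcm2 : c * (m : ℝ) < 1 - δ := by
    nlinarith [min_le_right δ (1 - δ), hc0]
  have hcm0 : 0 ≤ c * (m : ℝ) := by positivity
  set M : ℝ → ℝ := Mfun δ m with hMdef
  set N : ℝ → ℝ := Nfun δ with hNdef
  have hMmeas : Measurable M := by
    rw [hMdef]
    unfold Mfun
    exact (Real.measurable_log.abs.pow_const m).div (by fun_prop)
  have hN : IntegrableOn N (Ioi 0) := by
    apply (intA (a := -δ) (by linarith) (by linarith)).congr_fun ?_ measurableSet_Ioi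
    intro t ht
    have ht0 : (0:ℝ) < t := ht
    have h1 : (0:ℝ) < 1 + t := by linarith
    have h2 : (0:ℝ) < t ^ δ := Real.rpow_pos_of_pos ht0 δ
    show t ^ (-δ) / (1 + t) = N t
    rw [hNdef]
    unfold Nfun
    rw [Real.rpow_neg ht0.le]
    field_simp
  have hM : IntegrableOn M (Ioi 0) := by
    have hK : IntegrableOn
        (fun t : ℝ => c⁻¹ ^ m * (t ^ (c * (m:ℝ) - δ) / (1 + t)
          + t ^ (-(c * (m:ℝ)) - δ) / (1 + t))) (Ioi 0) := by
      apply Integrable.const_mul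
      exact (intA (by linarith) (by linarith)).add (intA (by linarith) (by linarith))
    apply hK.mono' hMmeas.aestronglyMeasurable.restrict
    filter_upwards [ae_restrict_mem measurableSet_Ioi] with t ht
    have ht0 : (0:ℝ) < t := ht
    have h1 : (0:ℝ) < 1 + t := by linarith
    have h2 : (0:ℝ) < t ^ δ := Real.rpow_pos_of_pos ht0 δ
    rw [Real.norm_eq_abs, abs_of_nonneg (by rw [hMdef]; unfold Mfun; positivity)]
    have hb := abs_log_pow_le m hc0 ht0
    calc M t ≤ (c⁻¹ ^ m * (t ^ (c * (m:ℝ)) + t ^ (-(c * (m:ℝ))))) / ((1 + t) * t ^ δ) := by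
          rw [hMdef]; unfold Mfun
          exact (div_le_div_iff_of_pos_right (by positivity)).mpr hb
      _ = c⁻¹ ^ m * (t ^ (c * (m:ℝ) - δ) / (1 + t) + t ^ (-(c * (m:ℝ)) - δ) / (1 + t)) := by
          rw [Real.rpow_sub ht0, Real.rpow_sub ht0, div_div, div_div, ← add_div,
            mul_div_assoc, mul_comm (t ^ δ) (1 + t)]
  set A : ℝ := ∫ t in Ioi (0:ℝ), M t with hAdef
  set B : ℝ := ∫ t in Ioi (0:ℝ), N t with hBdef
  have hA0 : 0 ≤ A := setIntegral_nonneg measurableSet_Ioi (fun t ht => by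
    rw [hMdef]; unfold Mfun; have : (0:ℝ) < t := ht; positivity)
  have hB0 : 0 ≤ B := setIntegral_nonneg measurableSet_Ioi (fun t ht => by
    rw [hNdef]; unfold Nfun; have : (0:ℝ) < t := ht; positivity)
  have hlog2 : (0:ℝ) < Real.log 2 := Real.log_pos one_lt_two
  refine ⟨2 ^ m * (A / Real.log 2 ^ m + B) + 1, by positivity, ?_⟩
  intro ε hε
  obtain ⟨hε0, hεhalf⟩ := hε
  set L := |Real.log ε| with hLdef
  have hL2 : Real.log 2 ≤ L := by
    have h1 : Real.log ε < 0 := Real.log_neg hε0 (by linarith)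
    have h2 : (2:ℝ) ≤ ε⁻¹ := by
      rw [← mul_le_mul_iff_right₀ hε0, mul_inv_cancel₀ hε0.ne']
      linarith
    rw [hLdef, abs_of_neg h1, ← Real.log_inv]
    exact Real.log_le_log (by norm_num) h2
  have hL0 : 0 ≤ L := abs_nonneg _
  have hQ : (0:ℝ) < ε ^ δ := Real.rpow_pos_of_pos hε0 δ
  -- pointwise bound
  have hbound : ∀ η ∈ Ioi (0:ℝ),
      ε * |Real.log η| ^ m / ((1 + ε * η) * (2 + η) ^ δ)
        ≤ (2 ^ m * ε ^ δ * ε) * (M (ε * η) + L ^ m * N (ε * η)) := by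
    intro η hη
    have hη0 : (0:ℝ) < η := hη
    have ht0 : (0:ℝ) < ε * η := by positivity
    have hu : (0:ℝ) < 1 + ε * η := by linarith
    have hP : (0:ℝ) < (ε * η) ^ δ := Real.rpow_pos_of_pos ht0 δ
    have hv : (0:ℝ) < (2 + η) ^ δ := Real.rpow_pos_of_pos (by linarith) δ
    have hlog : |Real.log η| ≤ |Real.log (ε * η)| + L := by
      have h1 : Real.log (ε * η) = Real.log ε + Real.log η :=
        Real.log_mul hε0.ne' hη0.ne'
      have h2 : Real.log η = Real.log (ε * η) - Real.log ε := by linarith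
      rw [h2, hLdef, sub_eq_add_neg]
      exact (abs_add_le _ _).trans (by rw [abs_neg])
    have hnum : |Real.log η| ^ m ≤ 2 ^ m * (|Real.log (ε * η)| ^ m + L ^ m) := by
      have hmax : (max |Real.log (ε * η)| L) ^ m ≤ |Real.log (ε * η)| ^ m + L ^ m := by
        rcases max_cases |Real.log (ε * η)| L with ⟨h, _⟩ | ⟨h, _⟩ <;> rw [h] <;>
          nlinarith [pow_nonneg (abs_nonneg (Real.log (ε * η))) m,
            pow_nonneg hL0 m]
      calc |Real.log η| ^ m ≤ (|Real.log (ε * η)| + L) ^ m :=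
            pow_le_pow_left₀ (abs_nonneg _) hlog m
        _ ≤ (2 * max |Real.log (ε * η)| L) ^ m := by
            apply pow_le_pow_left₀ (by positivity)
            have h1 := le_max_left |Real.log (ε * η)| L
            have h2 := le_max_right |Real.log (ε * η)| L
            linarith
        _ = 2 ^ m * (max |Real.log (ε * η)| L) ^ m := mul_pow _ _ _
        _ ≤ 2 ^ m * (|Real.log (ε * η)| ^ m + L ^ m) := by gcongr
    have hden : (ε * η) ^ δ / ε ^ δ ≤ (2 + η) ^ δ := by
      have h1 : (ε * η) ^ δ / ε ^ δ = η ^ δ := by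
        rw [← Real.div_rpow ht0.le hε0.le, mul_div_cancel_left₀ _ hε0.ne']
      rw [h1]
      exact Real.rpow_le_rpow hη0.le (by linarith) hδ0.le
    have hstep : ε * |Real.log η| ^ m / ((1 + ε * η) * (2 + η) ^ δ)
        ≤ (ε * (2 ^ m * (|Real.log (ε * η)| ^ m + L ^ m)))
          / ((1 + ε * η) * ((ε * η) ^ δ / ε ^ δ)) := by
      apply div_le_div₀ (by positivity)
        (mul_le_mul_of_nonneg_left hnum hε0.le) (by positivity)
        (mul_le_mul_of_nonneg_left hden hu.le)
    refine hstep.trans_eq ?_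
    rw [hMdef, hNdef]
    unfold Mfun Nfun
    rw [Real.mul_rpow hε0.le hη0.le]
    field_simp
  -- integrability of the majorant
  have hsum : IntegrableOn (fun t : ℝ => M t + L ^ m * N t) (Ioi 0) :=
    hM.add (hN.const_mul _)
  have hcomp : IntegrableOn (fun η : ℝ => M (ε * η) + L ^ m * N (ε * η)) (Ioi 0) := by
    have := (integrableOn_Ioi_comp_mul_left_iff
      (fun t : ℝ => M t + L ^ m * N t) 0 hε0).mpr
    rw [mul_zero] at this
    exact this hsum
  have hg_int : IntegrableOn
      (fun η : ℝ => (2 ^ m * ε ^ δ * ε) * (M (ε * η) + L ^ m * N (ε * η))) (Ioi 0) :=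
    hcomp.const_mul _
  -- combine
  calc ∫ η in Ioi (0:ℝ), ε * |Real.log η| ^ m / ((1 + ε * η) * (2 + η) ^ δ)
      ≤ ∫ η in Ioi (0:ℝ), (2 ^ m * ε ^ δ * ε) * (M (ε * η) + L ^ m * N (ε * η)) := by
        apply integral_mono_of_nonneg ?_ hg_int ?_
        · filter_upwards [ae_restrict_mem measurableSet_Ioi] with η hη
          have hη0 : (0:ℝ) < η := hη
          have h1 : (0:ℝ) < 1 + ε * η := by nlinarith
          have h2 : (0:ℝ) < (2 + η) ^ δ := Real.rpow_pos_of_pos (by linarith) δ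
          exact div_nonneg (by positivity) (mul_pos h1 h2).le
        · filter_upwards [ae_restrict_mem measurableSet_Ioi] with η hη
          exact hbound η hη
    _ = (2 ^ m * ε ^ δ * ε) * ∫ η in Ioi (0:ℝ), (M (ε * η) + L ^ m * N (ε * η)) :=
        integral_const_mul _ _
    _ = (2 ^ m * ε ^ δ * ε) * (ε⁻¹ * ∫ t in Ioi (0:ℝ), (M t + L ^ m * N t)) := by
        rw [integral_comp_mul_left_Ioi (fun t : ℝ => M t + L ^ m * N t) 0 hε0,
          mul_zero, smul_eq_mul]
    _ = 2 ^ m * ε ^ δ * (A + L ^ m * B) := by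
        rw [integral_add hM (hN.const_mul _), integral_const_mul, ← hAdef, ← hBdef]
        field_simp
    _ ≤ 2 ^ m * ε ^ δ * ((A / Real.log 2 ^ m * L ^ m) + L ^ m * B) := by
        gcongr
        rw [div_mul_eq_mul_div, le_div_iff₀ (pow_pos hlog2 m)]
        exact mul_le_mul_of_nonneg_left (pow_le_pow_left₀ hlog2.le hL2 m) hA0
    _ = (2 ^ m * (A / Real.log 2 ^ m + B)) * ε ^ δ * L ^ m := by ring
    _ ≤ (2 ^ m * (A / Real.log 2 ^ m + B) + 1) * ε ^ δ * L ^ m := by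
        have h1 : (0:ℝ) ≤ ε ^ δ * L ^ m := by positivity
        nlinarith
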